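/- Single-link extension lemma: Suppose every N-player spatial congestion game (with single-resource strategies, undirected graph, non-increasing user-specific payoffs) has a pure strategy Nash equilibrium. Then every (N+1)-player spatial congestion game whose graph is formed by attaching a new player via a single edge to one existing player of an N-player graph also has a pure strategy Nash equilibrium. -/

import Mathlib

open scoped Classical

/-- Number of neighbors of `i` in `G` choosing resource `r` under profile `σ`. -/
noncomputable def cnt {ι R : Type*} [Fintype ι]
    (G : SimpleGraph ι) (σ : ι → R) (i : ι) (r : R) : ℕ :=
  (Finset.univ.filter (fun j => G.Adj i j ∧ σ j = r)).card

/-- Pure strategy Nash equilibrium of a spatial congestion game with user-specific payoffs. -/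
def IsNE {ι R : Type*} [Fintype ι]
    (G : SimpleGraph ι) (g : ι → R → ℕ → ℤ) (σ : ι → R) : Prop :=
  ∀ (i : ι) (r : R), g i r (cnt G σ i r + 1) ≤ g i (σ i) (cnt G σ i (σ i) + 1)

/-- The graph obtained from `G` by attaching one new player (`none`) via a single edge to
the existing player `j0`. -/
def extGraph {ι : Type*} (G : SimpleGraph ι) (j0 : ι) : SimpleGraph (Option ι) where
  Adj x y := (∃ a b, x = some a ∧ y = some b ∧ G.Adj a b) ∨
    (x = none ∧ y = some j0) ∨ (x = some j0 ∧ y = none)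
  symm := ⟨by
    rintro x y (⟨a, b, rfl, rfl, h⟩ | ⟨rfl, rfl⟩ | ⟨rfl, rfl⟩)
    · exact Or.inl ⟨b, a, rfl, rfl, h.symm⟩
    · exact Or.inr (Or.inr ⟨rfl, rfl⟩)
    · exact Or.inr (Or.inl ⟨rfl, rfl⟩)⟩
  loopless := ⟨by
    rintro x h
    rcases h with ⟨a, b, h1, h2, hab⟩ | ⟨h1, h2⟩ | ⟨h1, h2⟩
    · rw [h1] at h2; rw [Option.some_inj] at h2; subst h2; exact G.irrefl hab
    · rw [h1] at h2; simp at h2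
    · rw [h2] at h1; simp at h1⟩

lemma extGraph_adj_ss {ι : Type*} (G : SimpleGraph ι) (j0 a b : ι) :
    (extGraph G j0).Adj (some a) (some b) ↔ G.Adj a b := by
  simp [extGraph]
lemma extGraph_adj_sn {ι : Type*} (G : SimpleGraph ι) (j0 a : ι) :
    (extGraph G j0).Adj (some a) none ↔ a = j0 := by
  simp [extGraph]
lemma extGraph_adj_ns {ι : Type*} (G : SimpleGraph ι) (j0 a : ι) :
    (extGraph G j0).Adj none (some a) ↔ a = j0 := by
  simp [extGraph, eq_comm]
lemma extGraph_adj_nn {ι : Type*} (G : SimpleGraph ι) (j0 : ι) :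
    ¬ (extGraph G j0).Adj none none := (extGraph G j0).irrefl

lemma cnt_card_sum {ι R : Type*} [Fintype ι] (G : SimpleGraph ι) (σ : ι → R) (i : ι) (r : R) :
    cnt G σ i r = ∑ j : ι, if G.Adj i j ∧ σ j = r then 1 else 0 := by
  rw [cnt, Finset.card_filter]

lemma cnt_ext_some {ι R : Type*} [Fintype ι] (G : SimpleGraph ι) (j0 : ι)
    (σ : ι → R) (t : R) (i : ι) (r : R) :
    cnt (extGraph G j0) (fun o => o.elim t σ) (some i) r =
      cnt G σ i r + (if i = j0 ∧ t = r then 1 else 0) := by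
  rw [cnt, Finset.card_filter, Fintype.sum_option, cnt_card_sum, add_comm]
  congr 1
  · exact Finset.sum_congr rfl fun j _ => by simp [extGraph_adj_ss]
  · simp [extGraph_adj_sn]

lemma cnt_ext_none {ι R : Type*} [Fintype ι] (G : SimpleGraph ι) (j0 : ι)
    (σ : ι → R) (t : R) (r : R) :
    cnt (extGraph G j0) (fun o => o.elim t σ) none r = if σ j0 = r then 1 else 0 := by
  rw [cnt, Finset.card_filter, Fintype.sum_option]
  simp only [extGraph_adj_ns, extGraph_adj_nn, Option.elim, false_and, if_false, zero_add]
  rw [show (fun j => if ((j : ι) = j0 ∧ σ j = r) then (1:ℕ) else 0)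
      = fun j => if j = j0 then (if σ j = r then 1 else 0) else 0 from ?_]
  · rw [Finset.sum_ite_eq' Finset.univ j0 (fun j => if σ j = r then (1:ℕ) else 0)]
    simp
  · funext j; by_cases h : j = j0 <;> simp [h]

/-- Single-link extension lemma: if every spatial congestion game on the player set `ι`
(with non-increasing user-specific payoffs) has a pure strategy Nash equilibrium, then every
game obtained by attaching one new player via a single edge to an existing player also has a
pure strategy Nash equilibrium. -/
theorem single_link_extension {ι R : Type*} [Fintype ι] [Fintype R] [Nonempty R]
    (hNE : ∀ (G : SimpleGraph ι) (g : ι → R → ℕ → ℤ),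
      (∀ i r, Antitone (g i r)) → ∃ σ : ι → R, IsNE G g σ)
    (G : SimpleGraph ι) (j0 : ι)
    (g : Option ι → R → ℕ → ℤ) (hg : ∀ i r, Antitone (g i r)) :
    ∃ σ : Option ι → R, IsNE (extGraph G j0) g σ := by
  by_cases h1 : ∃ r0 : R, ∀ r, r ≠ r0 → g none r 1 ≤ g none r0 2
  · -- Case 1: there is a resource the new player picks no matter what.
    obtain ⟨r0, hr0⟩ := h1
    set g' : ι → R → ℕ → ℤ :=
      fun i r n => g (some i) r (n + if i = j0 ∧ r = r0 then 1 else 0) with hg'def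
    have hg' : ∀ i r, Antitone (g' i r) := by
      intro i r a b hab
      exact hg (some i) r (by omega)
    obtain ⟨σ, hσ⟩ := hNE G g' hg'
    refine ⟨fun o => o.elim r0 σ, ?_⟩
    intro x r
    match x with
    | none =>
      simp only [cnt_ext_none, Option.elim_none, Option.elim_some]
      by_cases hr : r = r0
      · subst hr; exact le_refl _
      · calc g none r ((if σ j0 = r then 1 else 0) + 1)
            ≤ g none r 1 := hg none r (by omega)
          _ ≤ g none r0 2 := hr0 r hr
          _ ≤ g none r0 ((if σ j0 = r0 then 1 else 0) + 1) :=
              hg none r0 (by split_ifs <;> omega)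
    | some i =>
      simp only [cnt_ext_some, Option.elim_none, Option.elim_some]
      have h := hσ i r
      simp only [hg'def] at h
      have key : ∀ s : R, (if i = j0 ∧ r0 = s then 1 else 0)
          = (if i = j0 ∧ s = r0 then 1 else 0) := by
        intro s
        by_cases h2 : s = r0
        · subst h2; rfl
        · rw [if_neg (fun hc => h2 hc.2.symm), if_neg (fun hc => h2 hc.2)]
      have e1 : cnt G σ i r + (if i = j0 ∧ r0 = r then 1 else 0) + 1
          = cnt G σ i r + 1 + (if i = j0 ∧ r = r0 then 1 else 0) := by
        rw [key]; omega
      have e2 : cnt G σ i (σ i) + (if i = j0 ∧ r0 = σ i then 1 else 0) + 1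
          = cnt G σ i (σ i) + 1 + (if i = j0 ∧ σ i = r0 then 1 else 0) := by
        rw [key]; omega
      rw [e1, e2]
      exact h
  · -- Case 2: for every r0 there is a strictly better empty alternative.
    push_neg at h1
    obtain ⟨σ, hσ⟩ := hNE G (fun i => g (some i)) (fun i r => hg (some i) r)
    obtain ⟨w, hw, hwlt⟩ := h1 (σ j0)
    have hFne : (Finset.univ.filter (fun r => r ≠ σ j0)).Nonempty :=
      ⟨w, by simp [hw]⟩
    obtain ⟨t, ht, htmax⟩ :=
      Finset.exists_max_image (Finset.univ.filter (fun r => r ≠ σ j0))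
        (fun r => g none r 1) hFne
    have htne : t ≠ σ j0 := by simpa using (Finset.mem_filter.mp ht).2
    refine ⟨fun o => o.elim t σ, ?_⟩
    intro x r
    match x with
    | none =>
      simp only [cnt_ext_none, Option.elim_none, Option.elim_some]
      have hRHS : (if σ j0 = t then 1 else 0) = 0 := by simp [Ne.symm htne]
      rw [hRHS]
      by_cases hr : σ j0 = r
      · subst hr
        calc g none (σ j0) ((if σ j0 = σ j0 then 1 else 0) + 1)
            = g none (σ j0) 2 := by simp
          _ ≤ g none w 1 := le_of_lt hwlt
          _ ≤ g none t 1 := htmax w (by simp [hw])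
      · calc g none r ((if σ j0 = r then 1 else 0) + 1)
            = g none r 1 := by simp [hr]
          _ ≤ g none t 1 := htmax r (by simp [Ne.symm hr])
    | some i =>
      simp only [cnt_ext_some, Option.elim_none, Option.elim_some]
      have hind : (if i = j0 ∧ t = σ i then 1 else 0) = 0 := by
        by_cases h1 : i = j0
        · subst h1; simp [htne]
        · simp [h1]
      rw [hind]
      calc g (some i) r (cnt G σ i r + (if i = j0 ∧ t = r then 1 else 0) + 1)
          ≤ g (some i) r (cnt G σ i r + 1) := hg (some i) r (by omega)
        _ ≤ g (some i) (σ i) (cnt G σ i (σ i) + 0 + 1) := by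
            rw [add_zero]; exact hσ i r
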